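/- Let f be a positive semidefinite kernel. Then (1/T^2) * sum_{s,t} (f(x_s,x_t) - y_s·y_t)^2 is bounded above by the correlation-based objective E(Y, W, q) := -(2/T) * sum_t sum_{i=1}^N [ q_i y_t[i] f(w_i, x_t) - (1/2) q_i^2 f(w_i, w_i) ] + sum_{i,j=1}^N ( (1/T) sum_t y_t[i] y_t[j] )^2 + (1/T^2) * sum_{s,t} f(x_s,x_t)^2, for any choice of vectors w_1,...,w_N in R^M and scalars q_1,...,q_N. -/
import Mathlib


open Finset

private lemma psd_aux (M T : ℕ) (f : (Fin M → ℝ) → (Fin M → ℝ) → ℝ)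
    (hsymm : ∀ u v, f u v = f v u)
    (hpsd : ∀ (n : ℕ) (z : Fin n → (Fin M → ℝ)) (c : Fin n → ℝ),
      0 ≤ ∑ s, ∑ t, c s * c t * f (z s) (z t))
    (x : Fin T → (Fin M → ℝ)) (a : Fin T → ℝ) (u : Fin M → ℝ) (b : ℝ) :
    2 * b * (∑ t, a t * f u (x t)) - b ^ 2 * f u u ≤
      ∑ s, ∑ t, a s * a t * f (x s) (x t) := by
  have h := hpsd (T + 1) (Fin.snoc x u) (Fin.snoc a (-b))
  simp only [Fin.sum_univ_castSucc, Fin.snoc_castSucc, Fin.snoc_last] at h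
  rw [Finset.sum_add_distrib] at h
  have hs : ∀ s : Fin T, a s * -b * f (x s) u = -b * a s * f u (x s) := by
    intro s; rw [hsymm]; ring
  simp only [hs] at h
  have e : ∑ s : Fin T, -b * a s * f u (x s) = -b * ∑ t, a t * f u (x t) := by
    rw [Finset.mul_sum]; exact Finset.sum_congr rfl fun s _ => by ring
  rw [e] at h
  nlinarith [h]

theorem correlation_based_upper_bound (M N T : ℕ) (hT : 0 < T)
    (f : (Fin M → ℝ) → (Fin M → ℝ) → ℝ)
    (hsymm : ∀ u v, f u v = f v u)
    (hpsd : ∀ (n : ℕ) (z : Fin n → (Fin M → ℝ)) (c : Fin n → ℝ),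
      0 ≤ ∑ s, ∑ t, c s * c t * f (z s) (z t))
    (x : Fin T → (Fin M → ℝ)) (y : Fin T → (Fin N → ℝ))
    (w : Fin N → (Fin M → ℝ)) (q : Fin N → ℝ) :
    (1 / (T : ℝ) ^ 2) * ∑ s, ∑ t, (f (x s) (x t) - ∑ i, y s i * y t i) ^ 2 ≤
      -(2 / (T : ℝ)) * (∑ t, ∑ i,
          (q i * y t i * f (w i) (x t) - (1 / 2) * (q i) ^ 2 * f (w i) (w i))) +
        (∑ i, ∑ j, ((1 / (T : ℝ)) * ∑ t, y t i * y t j) ^ 2) +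
        (1 / (T : ℝ) ^ 2) * ∑ s, ∑ t, (f (x s) (x t)) ^ 2 := by
  set S : ℝ := (T : ℝ) with hSdef
  have hS : (0 : ℝ) < S := by rw [hSdef]; exact_mod_cast hT
  have hS0 : S ≠ 0 := ne_of_gt hS
  -- abbreviations
  set A : ℝ := ∑ s, ∑ t, (f (x s) (x t)) ^ 2 with hA
  set B : ℝ := ∑ s, ∑ t, f (x s) (x t) * ∑ i, y s i * y t i with hBdef
  set P : ℝ := ∑ i, ∑ j, (∑ t : Fin T, y t i * y t j) ^ 2 with hP
  set D : ℝ := ∑ t, ∑ i,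
      (q i * y t i * f (w i) (x t) - (1 / 2) * (q i) ^ 2 * f (w i) (w i)) with hD
  -- B as a sum over i of PSD quadratic forms
  have hB : B = ∑ i, ∑ s, ∑ t, y s i * y t i * f (x s) (x t) := by
    rw [hBdef]
    have h1 : ∀ s t : Fin T, f (x s) (x t) * ∑ i, y s i * y t i
        = ∑ i, y s i * y t i * f (x s) (x t) := by
      intro s t; rw [Finset.mul_sum]; exact Finset.sum_congr rfl fun i _ => by ring
    simp only [h1]
    calc ∑ s : Fin T, ∑ t : Fin T, ∑ i : Fin N, y s i * y t i * f (x s) (x t)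
        = ∑ s : Fin T, ∑ i : Fin N, ∑ t : Fin T, y s i * y t i * f (x s) (x t) :=
          Finset.sum_congr rfl fun s _ => Finset.sum_comm
      _ = ∑ i : Fin N, ∑ s : Fin T, ∑ t : Fin T, y s i * y t i * f (x s) (x t) :=
          Finset.sum_comm
  -- each quadratic form is nonnegative
  have hBpos : (0 : ℝ) ≤ B := by
    rw [hB]
    exact Finset.sum_nonneg fun i _ => hpsd T x (fun t => y t i)
  -- key inequality
  have hkey : 2 * (S * D) ≤ B := by
    have hDswap : D = ∑ i, (q i * (∑ t, y t i * f (w i) (x t))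
        - (S / 2) * (q i) ^ 2 * f (w i) (w i)) := by
      rw [hD, Finset.sum_comm]
      refine Finset.sum_congr rfl fun i _ => ?_
      rw [Finset.sum_sub_distrib]
      have h2 : ∑ t, q i * y t i * f (w i) (x t)
          = q i * ∑ t, y t i * f (w i) (x t) := by
        rw [Finset.mul_sum]; exact Finset.sum_congr rfl fun t _ => by ring
      rw [h2, Finset.sum_const, Finset.card_univ, Fintype.card_fin, nsmul_eq_mul,
        hSdef]
      ring
    rw [hB, hDswap, Finset.mul_sum, Finset.mul_sum]
    refine Finset.sum_le_sum fun i _ => ?_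
    have h := psd_aux M T f hsymm hpsd x (fun t => y t i) (w i) (S * q i)
    nlinarith [h]
  -- expand the square
  have E1 : ∑ s, ∑ t, (f (x s) (x t) - ∑ i, y s i * y t i) ^ 2
      = A - 2 * B + ∑ s, ∑ t, (∑ i, y s i * y t i) ^ 2 := by
    rw [hA, hBdef]
    have h1 : ∀ s t : Fin T, (f (x s) (x t) - ∑ i, y s i * y t i) ^ 2
        = (f (x s) (x t)) ^ 2 - 2 * (f (x s) (x t) * ∑ i, y s i * y t i)
          + (∑ i, y s i * y t i) ^ 2 := fun s t => by ring
    simp only [h1, Finset.sum_add_distrib, Finset.sum_sub_distrib, ← Finset.mul_sum]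
  -- swap of summations
  have E3 : ∑ s, ∑ t, (∑ i : Fin N, y s i * y t i) ^ 2 = P := by
    rw [hP]
    have h1 : ∀ s t : Fin T, (∑ i : Fin N, y s i * y t i) ^ 2
        = ∑ i, ∑ j, (y s i * y s j) * (y t i * y t j) := by
      intro s t
      rw [sq, Finset.sum_mul_sum]
      exact Finset.sum_congr rfl fun i _ => Finset.sum_congr rfl fun j _ => by ring
    have h2 : ∀ i j : Fin N, (∑ t : Fin T, y t i * y t j) ^ 2
        = ∑ s, ∑ t, (y s i * y s j) * (y t i * y t j) := by
      intro i j
      rw [sq, Finset.sum_mul_sum]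
    simp only [h1]
    rw [Finset.sum_comm]
    calc ∑ t : Fin T, ∑ s : Fin T, ∑ i, ∑ j, (y s i * y s j) * (y t i * y t j)
        = ∑ t : Fin T, ∑ i, ∑ s : Fin T, ∑ j, (y s i * y s j) * (y t i * y t j) := by
          exact Finset.sum_congr rfl fun t _ => Finset.sum_comm
      _ = ∑ i, ∑ t : Fin T, ∑ s : Fin T, ∑ j, (y s i * y s j) * (y t i * y t j) := by
          rw [Finset.sum_comm]
      _ = ∑ i, ∑ t : Fin T, ∑ j, ∑ s : Fin T, (y s i * y s j) * (y t i * y t j) := by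
          exact Finset.sum_congr rfl fun i _ => Finset.sum_congr rfl fun t _ =>
            Finset.sum_comm
      _ = ∑ i, ∑ j, ∑ t : Fin T, ∑ s : Fin T, (y s i * y s j) * (y t i * y t j) := by
          exact Finset.sum_congr rfl fun i _ => Finset.sum_comm
      _ = ∑ i, ∑ j, (∑ t : Fin T, y t i * y t j) ^ 2 := by
          refine Finset.sum_congr rfl fun i _ => Finset.sum_congr rfl fun j _ => ?_
          rw [h2 i j, Finset.sum_comm]
  have E4 : ∑ i, ∑ j, ((1 / S) * ∑ t, y t i * y t j) ^ 2 = (1 / S ^ 2) * P := by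
    rw [hP, Finset.mul_sum]
    refine Finset.sum_congr rfl fun i _ => ?_
    rw [Finset.mul_sum]
    exact Finset.sum_congr rfl fun j _ => by field_simp
  rw [E1, E3, E4]
  have hmain : (1 / S) * D ≤ (1 / S ^ 2) * B := by
    rw [div_mul_eq_mul_div, div_mul_eq_mul_div, div_le_div_iff₀ (by positivity) (by positivity)]
    nlinarith [hkey, hBpos, hS]
  have expandL : (1 / S ^ 2) * (A - 2 * B + P)
      = (1 / S ^ 2) * A - 2 * ((1 / S ^ 2) * B) + (1 / S ^ 2) * P := by ring
  have expandR : -(2 / S) * D = -2 * ((1 / S) * D) := by ring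
  linarith [hmain, expandL, expandR]
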